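/- Let (X,d) be a metric space whose underlying set X is finite and nonempty, and suppose (X,d) satisfies the tie-breaking rule and the fourth-point condition. Then there exists a tree T on X together with positive edge weights w such that for all x,y ∈ X, d(x,y) equals the sum of w over the edges of the unique path in T joining x and y. (A finite median metric space with pairwise distinct distances is realised by a fully labelled positively weighted tree on the same point set.) -/

import Mathlib

/-- The fourth-point condition. -/
def FourthPointCondition (X : Type*) [MetricSpace X] : Prop :=
  ∀ x y z : X, ∃ p : X,
    dist x p + dist y p + dist z p = (dist x y + dist y z + dist z x) / 2

/-- The tie-breaking rule: distances of distinct unordered pairs are distinct. -/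
def TieBreakingRule (X : Type*) [MetricSpace X] : Prop :=
  ∀ x y u v : X, x ≠ y → u ≠ v → ({x, y} : Set X) ≠ {u, v} → dist x y ≠ dist u v

open SimpleGraph

namespace TreeRealAux

variable {X : Type*} [MetricSpace X]

/-- The candidate tree: `x ~ y` iff nothing lies strictly between them. -/
def G (X : Type*) [MetricSpace X] : SimpleGraph X where
  Adj x y := x ≠ y ∧ ∀ p : X, dist x p + dist p y = dist x y → p = x ∨ p = y
  symm := by
    constructor
    intro x y hxy
    obtain ⟨hne, h⟩ := hxy
    refine ⟨hne.symm, fun p hp => ?_⟩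
    have hp' : dist x p + dist p y = dist x y := by
      have c1 : dist y p = dist p y := dist_comm _ _
      have c2 : dist p x = dist x p := dist_comm _ _
      have c3 : dist y x = dist x y := dist_comm _ _
      linarith
    rcases h p hp' with h' | h' <;> tauto
  loopless := ⟨fun x hx => hx.1 rfl⟩

lemma adj_iff {x y : X} :
    (G X).Adj x y ↔ x ≠ y ∧ ∀ p : X, dist x p + dist p y = dist x y → p = x ∨ p = y :=
  Iff.rfl

/-- Edge weights: the distance between the endpoints. -/
noncomputable def w : Sym2 X → ℝ :=
  Sym2.lift ⟨fun a b => dist a b, fun a b => dist_comm a b⟩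

@[simp] lemma w_mk (a b : X) : w s(a, b) = dist a b := rfl

lemma w_pos : ∀ e ∈ (G X).edgeSet, 0 < w e := by
  intro e
  induction e using Sym2.ind with
  | _ a b =>
    intro he
    rw [SimpleGraph.mem_edgeSet, adj_iff] at he
    rw [w_mk]
    exact dist_pos.mpr he.1

/-- The fourth point is a Steiner point of the triple. -/
lemma steiner (h4 : FourthPointCondition X) (x y z : X) :
    ∃ p : X, dist x p + dist y p = dist x y ∧ dist y p + dist z p = dist y z ∧
      dist x p + dist z p = dist x z := by
  obtain ⟨p, hp⟩ := h4 x y z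
  have t1 : dist x y ≤ dist x p + dist y p := by
    have := dist_triangle x p y
    have c : dist p y = dist y p := dist_comm _ _
    linarith
  have t2 : dist y z ≤ dist y p + dist z p := by
    have := dist_triangle y p z
    have c : dist p z = dist z p := dist_comm _ _
    linarith
  have t3 : dist z x ≤ dist z p + dist x p := by
    have := dist_triangle z p x
    have c : dist p x = dist x p := dist_comm _ _
    linarith
  have c : dist z x = dist x z := dist_comm _ _
  exact ⟨p, by linarith, by linarith, by linarith⟩

/-- Every point lies on one of the two sides of an edge. -/
lemma side (h4 : FourthPointCondition X) {x y : X} (hxy : (G X).Adj x y) (z : X) :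
    dist z y = dist z x + dist x y ∨ dist z x = dist z y + dist x y := by
  obtain ⟨p, e1, e2, e3⟩ := steiner h4 x y z
  have hb : dist x p + dist p y = dist x y := by
    have c : dist y p = dist p y := dist_comm _ _
    linarith
  rcases hxy.2 p hb with rfl | rfl
  · left
    linarith [e2, _root_.dist_comm z y, _root_.dist_comm y p]
  · right
    linarith [e3, _root_.dist_comm z x]

/-- Crossing lemma: an edge whose endpoints lie on opposite sides of the edge
`{x, y}` must be the edge `{x, y}` itself. -/
lemma cross (htie : TieBreakingRule X) (h4 : FourthPointCondition X)
    {x y a b : X} (hxy : (G X).Adj x y) (hab : (G X).Adj a b)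
    (ha : dist a y = dist a x + dist x y) (hb : dist b x = dist b y + dist x y) :
    a = x ∧ b = y := by
  have hdxy : 0 < dist x y := dist_pos.mpr hxy.1
  obtain ⟨p, e1, e2, e3⟩ := steiner h4 a b x
  have hpb : dist a p + dist p b = dist a b := by
    linarith [_root_.dist_comm p b]
  have hstar : dist a b + dist a x = dist b x := by
    rcases hab.2 p hpb with rfl | rfl
    · -- a has been replaced by p
      linarith [e2, _root_.dist_comm b p, _root_.dist_comm x p]
    · -- b has been replaced by p
      exfalso
      have t : dist a y ≤ dist a p + dist p y := dist_triangle a p y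
      linarith [e3, t, _root_.dist_comm x p]
  obtain ⟨q, f1, f2, f3⟩ := steiner h4 a b y
  have hqb : dist a q + dist q b = dist a b := by
    linarith [_root_.dist_comm q b]
  have hstar2 : dist a b + dist b y = dist a y := by
    rcases hab.2 q hqb with rfl | rfl
    · -- a has been replaced by q
      exfalso
      have t : dist b x ≤ dist b q + dist q x := dist_triangle b q x
      linarith [f2, t, _root_.dist_comm y q]
    · -- b has been replaced by q
      linarith [f3, _root_.dist_comm y q]
  have hdab : dist a b = dist x y := by linarith
  have hsets : ({a, b} : Set X) = {x, y} := by
    by_contra hne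
    exact htie a b x y hab.1 hxy.1 hne hdab
  have haxy : a = x ∨ a = y := by
    have : a ∈ ({x, y} : Set X) := hsets ▸ (by simp : a ∈ ({a, b} : Set X))
    simpa using this
  have hbxy : b = x ∨ b = y := by
    have : b ∈ ({x, y} : Set X) := hsets ▸ (by simp : b ∈ ({a, b} : Set X))
    simpa using this
  have hay : a ≠ y := by
    intro h
    rw [h] at ha
    have := dist_self y
    linarith [_root_.dist_comm y x]
  have hbx : b ≠ x := by
    intro h
    rw [h] at hb
    have := dist_self x
    linarith
  exact ⟨haxy.resolve_right hay, hbxy.resolve_left hbx⟩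

/-- Any walk joining the two sides of an edge uses that edge. -/
lemma walk_uses_edge (htie : TieBreakingRule X) (h4 : FourthPointCondition X)
    {x y : X} (hxy : (G X).Adj x y) :
    ∀ {a b : X} (W : (G X).Walk a b), dist a y = dist a x + dist x y →
      dist b x = dist b y + dist x y → s(x, y) ∈ W.edges := by
  intro a b W
  induction W with
  | nil =>
    intro h1 h2
    exfalso
    have : 0 < dist x y := dist_pos.mpr hxy.1
    linarith
  | @cons u v c h W ih =>
    intro h1 h2
    rcases side h4 hxy v with hv | hv
    · rw [SimpleGraph.Walk.edges_cons]
      exact List.mem_cons_of_mem _ (ih hv h2)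
    · obtain ⟨rfl, rfl⟩ := cross htie h4 hxy h h1 hv
      rw [SimpleGraph.Walk.edges_cons]
      exact List.mem_cons_self

lemma acyclic (htie : TieBreakingRule X) (h4 : FourthPointCondition X) :
    (G X).IsAcyclic := by
  rw [isAcyclic_iff_forall_adj_isBridge]
  intro x y hxy
  rw [SimpleGraph.isBridge_iff]
  rw [SimpleGraph.reachable_delete_edges_iff_exists_walk]
  rintro ⟨W, hW⟩
  exact hW (walk_uses_edge htie h4 hxy W (by simp) (by simp [_root_.dist_comm]))

lemma walk_sum_ge {x y : X} (W : (G X).Walk x y) :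
    dist x y ≤ (W.edges.map w).sum := by
  induction W with
  | nil => simp
  | @cons u v c h W ih =>
    rw [SimpleGraph.Walk.edges_cons, List.map_cons, List.sum_cons, w_mk]
    have := dist_triangle u v c
    linarith

open Classical in
/-- The set of points strictly between `x` and `y`. -/
noncomputable def btwS [Fintype X] (x y : X) : Finset X :=
  Finset.univ.filter fun p => p ≠ x ∧ p ≠ y ∧ dist x p + dist p y = dist x y

lemma mem_btwS [Fintype X] {x y p : X} :
    p ∈ btwS x y ↔ p ≠ x ∧ p ≠ y ∧ dist x p + dist p y = dist x y := by
  classical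
  simp [btwS]

lemma exists_geodesic [Fintype X] (h4 : FourthPointCondition X) (x y : X) :
    ∃ W : (G X).Walk x y, (W.edges.map w).sum = dist x y := by
  classical
  suffices H : ∀ (n : ℕ) (x y : X), (btwS x y).card = n →
      ∃ W : (G X).Walk x y, (W.edges.map w).sum = dist x y from H _ x y rfl
  intro n
  induction n using Nat.strong_induction_on with
  | _ n ih =>
    intro x y hn
    by_cases hxy : x = y
    · subst hxy; exact ⟨SimpleGraph.Walk.nil, by simp⟩
    by_cases hadj : (G X).Adj x y
    · exact ⟨SimpleGraph.Walk.cons hadj SimpleGraph.Walk.nil, by simp⟩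
    · have hex : ∃ p : X, p ≠ x ∧ p ≠ y ∧ dist x p + dist p y = dist x y := by
        by_contra hne
        push_neg at hne
        refine hadj ⟨hxy, fun p hp => ?_⟩
        by_contra hc
        push_neg at hc
        exact hne p hc.1 hc.2 hp
      obtain ⟨p, hpx, hpy, hp⟩ := hex
      have hpmem : p ∈ btwS x y := mem_btwS.mpr ⟨hpx, hpy, hp⟩
      have hsub1 : btwS x p ⊆ btwS x y := by
        intro q hq
        rw [mem_btwS] at hq ⊢
        obtain ⟨hqx, hqp, hq⟩ := hq
        have t1 : dist x y ≤ dist x q + dist q y := dist_triangle x q y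
        have t2 : dist q y ≤ dist q p + dist p y := dist_triangle q p y
        have hqy : q ≠ y := by
          intro h
          rw [h] at hq
          have h0 : 0 < dist p y := dist_pos.mpr hpy
          linarith [_root_.dist_comm y p]
        exact ⟨hqx, hqy, by linarith⟩
      have hsub2 : btwS p y ⊆ btwS x y := by
        intro q hq
        rw [mem_btwS] at hq ⊢
        obtain ⟨hqp, hqy, hq⟩ := hq
        have t1 : dist x y ≤ dist x q + dist q y := dist_triangle x q y
        have t2 : dist x q ≤ dist x p + dist p q := dist_triangle x p q
        have hqx : q ≠ x := by
          intro h
          rw [h] at hq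
          have h0 : 0 < dist x p := dist_pos.mpr (Ne.symm hpx)
          linarith [_root_.dist_comm p x]
        exact ⟨hqx, hqy, by linarith⟩
      have hlt1 : (btwS x p).card < n := by
        rw [← hn]
        apply Finset.card_lt_card
        rw [Finset.ssubset_def]
        refine ⟨hsub1, fun hsup => ?_⟩
        exact (mem_btwS.mp (hsup hpmem)).2.1 rfl
      have hlt2 : (btwS p y).card < n := by
        rw [← hn]
        apply Finset.card_lt_card
        rw [Finset.ssubset_def]
        refine ⟨hsub2, fun hsup => ?_⟩
        exact (mem_btwS.mp (hsup hpmem)).1 rfl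
      obtain ⟨W1, hW1⟩ := ih _ hlt1 x p rfl
      obtain ⟨W2, hW2⟩ := ih _ hlt2 p y rfl
      refine ⟨W1.append W2, ?_⟩
      rw [SimpleGraph.Walk.edges_append, List.map_append, List.sum_append, hW1, hW2, hp]

lemma connected [Fintype X] [Nonempty X] (h4 : FourthPointCondition X) :
    (G X).Connected := by
  rw [connected_iff]
  exact ⟨fun x y => ⟨(exists_geodesic h4 x y).choose⟩, ‹Nonempty X›⟩

lemma sum_toFinset_le {α : Type*} [DecidableEq α] (f : α → ℝ) :
    ∀ l : List α, (∀ a ∈ l, 0 ≤ f a) → ∑ e ∈ l.toFinset, f e ≤ (l.map f).sum := by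
  intro l
  induction l with
  | nil => simp
  | cons a l ih =>
    intro h
    rw [List.toFinset_cons, List.map_cons, List.sum_cons]
    have hrest := ih fun b hb => h b (List.mem_cons_of_mem _ hb)
    by_cases ha : a ∈ l.toFinset
    · rw [Finset.insert_eq_self.mpr ha]
      have h0 := h a List.mem_cons_self
      linarith
    · rw [Finset.sum_insert ha]
      linarith

end TreeRealAux

theorem exists_realising_tree_of_tieBreaking_fourthPointCondition
    {X : Type*} [MetricSpace X] [Fintype X] [Nonempty X]
    (htie : TieBreakingRule X) (h4 : FourthPointCondition X) :
    ∃ (T : SimpleGraph X) (w : Sym2 X → ℝ), T.IsTree ∧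
      (∀ e ∈ T.edgeSet, 0 < w e) ∧
      ∀ (x y : X) (W : T.Walk x y), W.IsPath → (W.edges.map w).sum = dist x y := by
  classical
  have hac := TreeRealAux.acyclic htie h4
  refine ⟨TreeRealAux.G X, TreeRealAux.w, ⟨TreeRealAux.connected h4, hac⟩,
    TreeRealAux.w_pos, ?_⟩
  intro x y W hW
  obtain ⟨W0, hW0⟩ := TreeRealAux.exists_geodesic h4 x y
  have hWeq : W = W0.bypass := by
    have := hac.path_unique ⟨W, hW⟩ ⟨W0.bypass, W0.bypass_isPath⟩
    exact congrArg Subtype.val this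
  have hnodup : W.edges.Nodup := hW.isTrail.edges_nodup
  have hge := TreeRealAux.walk_sum_ge W
  have hle : (W.edges.map TreeRealAux.w).sum ≤ dist x y := by
    rw [← List.sum_toFinset _ hnodup]
    calc ∑ e ∈ W.edges.toFinset, TreeRealAux.w e
        ≤ ∑ e ∈ W0.edges.toFinset, TreeRealAux.w e := by
          apply Finset.sum_le_sum_of_subset_of_nonneg
          · intro e he
            rw [List.mem_toFinset] at he ⊢
            rw [hWeq] at he
            exact W0.edges_bypass_subset he
          · intro e he _
            rw [List.mem_toFinset] at he
            exact le_of_lt (TreeRealAux.w_pos e (W0.edges_subset_edgeSet he))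
      _ ≤ (W0.edges.map TreeRealAux.w).sum :=
          TreeRealAux.sum_toFinset_le _ _ fun e he =>
            le_of_lt (TreeRealAux.w_pos e (W0.edges_subset_edgeSet he))
      _ = dist x y := hW0
  linarith
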